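/- Let α > 0, let G be the Green's function of the Robin problem, fix x₀ ∈ [−π,π], and let G^#(x₀,·) denote the symmetric decreasing rearrangement of the function y ↦ G(x₀,y) on [−π,π]. Then G^#(x₀,y) ≤ G(0,y) for all y ∈ [−π,π]; moreover, equality holds for all y ∈ [−π,π] if and only if it holds for some y ∈ [−π,π], if and only if x₀ = 0. -/

import Mathlib

open MeasureTheory Real Set
open scoped ENNReal

/-- The constant `c_α = α/(1+απ)`. -/
noncomputable def cA (α : ℝ) : ℝ := α / (1 + α * π)

/-- The Green's function of the Robin problem on `[-π, π]`. -/
noncomputable def robinGreen (α x y : ℝ) : ℝ :=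
  -(1/2) * cA α * x * y - (1/2) * |x - y| + 1 / (2 * cA α)

/-- The solution of the Robin problem with heat source `f`. -/
noncomputable def robinSol (α : ℝ) (f : ℝ → ℝ) (x : ℝ) : ℝ :=
  ∫ y in (-π)..π, robinGreen α x y * f y

/-- The decreasing rearrangement `f^*` of a function `f : [-π,π] → ℝ`:
`f^*(0)` is the essential supremum, `f^*(t)` for `t ∈ (0, 2π)` is
`inf { s | λ({x ∈ [-π,π] : f x > s}) ≤ t }`, and `f^*(2π)` is the essential infimum. -/
noncomputable def decRearr (f : ℝ → ℝ) (t : ℝ) : ℝ :=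
  if t ≤ 0 then essSup f (volume.restrict (Icc (-π) π))
  else if t < 2 * π then
    sInf {s : ℝ | volume {x ∈ Icc (-π) π | s < f x} ≤ ENNReal.ofReal t}
  else essInf f (volume.restrict (Icc (-π) π))

/-- The symmetric decreasing rearrangement `f^#(t) = f^*(2|t|)` of `f : [-π,π] → ℝ`. -/
noncomputable def sdr (f : ℝ → ℝ) (t : ℝ) : ℝ := decRearr f (2 * |t|)

noncomputable def gg (c K x y : ℝ) : ℝ := K - (1/2)*c*x*y - (1/2)*|x - y|

lemma gg_cont (c K x : ℝ) : Continuous (gg c K x) := by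
  unfold gg
  continuity

lemma gg_zero (c K y : ℝ) : gg c K 0 y = K - |y|/2 := by
  unfold gg; rw [zero_sub, abs_neg]; ring

lemma gg_max (c K x₀ : ℝ) (y : ℝ) :
    gg c K x₀ y = (K - c/2*x₀^2) - max ((1-c*x₀)/2*(x₀-y)) ((1+c*x₀)/2*(y-x₀)) := by
  unfold gg
  rcases le_total y x₀ with h | h
  · rw [max_eq_left (by nlinarith), abs_of_nonneg (by linarith)]; ring
  · rw [max_eq_right (by nlinarith), abs_of_nonpos (by linarith)]; ring

lemma gg_pos (c K x₀ : ℝ) (hc : 0 < c) (hcπ : c * π < 1) (hK : 2*c*K = 1)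
    (hx1 : -π ≤ x₀) (hx2 : x₀ ≤ π) :
    ∀ y ∈ Icc (-π) π, 0 < gg c K x₀ y := by
  intro y hy
  have hπ := pi_pos
  have hcx1 : c * x₀ < 1 := by nlinarith
  have hcx2 : -1 < c * x₀ := by nlinarith
  rcases hy with ⟨hy1, hy2⟩
  rw [gg_max]
  rcases le_total y x₀ with h | h
  · rw [max_eq_left (by nlinarith)]
    nlinarith [mul_pos (show (0:ℝ) < 1 - c*x₀ by linarith) (show (0:ℝ) < 1 - c*π by linarith),
      mul_pos hc (show (0:ℝ) < 1 - c*x₀ by linarith)]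
  · rw [max_eq_right (by nlinarith)]
    nlinarith [mul_pos (show (0:ℝ) < 1 + c*x₀ by linarith) (show (0:ℝ) < 1 - c*π by linarith),
      mul_pos hc (show (0:ℝ) < 1 + c*x₀ by linarith)]

lemma gg_mid (c K x₀ : ℝ) (hc : 0 < c) (hcπ : c * π < 1) (hK : 2*c*K = 1)
    (hx1 : -π ≤ x₀) (hx2 : x₀ ≤ π) (t : ℝ) (ht1 : 0 < t) (ht2 : t < 2*π) :
    decRearr (gg c K x₀) t ≤ (K - c/2*x₀^2) - t*(1-(c*x₀)^2)/4 := by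
  have hπ := pi_pos
  have hcx1 : c * x₀ < 1 := by nlinarith
  have hcx2 : -1 < c * x₀ := by nlinarith
  rw [decRearr, if_neg (not_le.mpr ht1), if_pos ht2]
  apply csInf_le
  · refine ⟨0, fun s hs => ?_⟩
    simp only [mem_setOf_eq] at hs
    by_contra hneg
    push_neg at hneg
    have hEq : {x ∈ Icc (-π) π | s < gg c K x₀ x} = Icc (-π) π := by
      apply Subset.antisymm (fun x hx => hx.1)
      intro x hx
      exact ⟨hx, lt_trans hneg (gg_pos c K x₀ hc hcπ hK hx1 hx2 x hx)⟩
    rw [hEq, Real.volume_Icc] at hs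
    have := (ENNReal.ofReal_le_ofReal_iff (le_of_lt ht1)).mp hs
    linarith
  · simp only [mem_setOf_eq]
    have hsub : {x ∈ Icc (-π) π | (K - c/2*x₀^2) - t*(1-(c*x₀)^2)/4 < gg c K x₀ x} ⊆
        Ioo (x₀ - t*(1+c*x₀)/2) (x₀ + t*(1-c*x₀)/2) := by
      rintro y ⟨hy, hfy⟩
      rw [gg_max] at hfy
      have hmax : max ((1-c*x₀)/2*(x₀-y)) ((1+c*x₀)/2*(y-x₀)) < t*(1-(c*x₀)^2)/4 := by
        linarith
      have h1 : (1-c*x₀)/2*(x₀-y) < t*(1-(c*x₀)^2)/4 :=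
        lt_of_le_of_lt (le_max_left _ _) hmax
      have h2 : (1+c*x₀)/2*(y-x₀) < t*(1-(c*x₀)^2)/4 :=
        lt_of_le_of_lt (le_max_right _ _) hmax
      constructor
      · nlinarith [h1, mul_pos (show (0:ℝ) < 1 - c*x₀ by linarith) ht1]
      · nlinarith [h2, mul_pos (show (0:ℝ) < 1 + c*x₀ by linarith) ht1]
    refine le_trans (measure_mono hsub) ?_
    rw [Real.volume_Ioo]
    apply le_of_eq
    congr 1
    ring


lemma meas_pos_inter {U : Set ℝ} (hU : IsOpen U) {a : ℝ} (haU : a ∈ U)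
    (ha : a ∈ Icc (-π) π) : 0 < volume (U ∩ Icc (-π) π) := by
  obtain ⟨δ, hδ, hb⟩ := Metric.isOpen_iff.mp hU a haU
  have hπ := pi_pos
  have hsub : Ioo (max (a - δ) (-π)) (min (a + δ) π) ⊆ U ∩ Icc (-π) π := by
    intro x hx
    refine ⟨hb ?_, le_of_lt (lt_of_le_of_lt (le_max_right _ _) hx.1),
      le_of_lt (lt_of_lt_of_le hx.2 (min_le_right _ _))⟩
    rw [Real.ball_eq_Ioo]
    exact ⟨lt_of_le_of_lt (le_max_left _ _) hx.1, lt_of_lt_of_le hx.2 (min_le_left _ _)⟩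
  refine lt_of_lt_of_le ?_ (measure_mono hsub)
  rw [Real.volume_Ioo]
  rw [ENNReal.ofReal_pos]
  rcases ha with ⟨ha1, ha2⟩
  rcases le_total (a - δ) (-π) with h | h <;> rcases le_total (a + δ) π with h' | h' <;>
    simp [max_eq_left, max_eq_right, min_eq_left, min_eq_right, h, h'] <;> linarith

lemma essInf_le_apply' {f : ℝ → ℝ} (hf : Continuous f) {a : ℝ} (ha : a ∈ Icc (-π) π)
    (h0 : ∀ y ∈ Icc (-π) π, 0 ≤ f y) :
    essInf f (volume.restrict (Icc (-π) π)) ≤ f a := by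
  rw [essInf_eq_sSup]
  refine Real.sSup_le ?_ (h0 a ha)
  intro b hb
  simp only [mem_setOf_eq] at hb
  rw [Measure.restrict_apply' measurableSet_Icc] at hb
  by_contra hba
  push_neg at hba
  have hU : IsOpen {x | f x < b} := isOpen_lt hf continuous_const
  exact (meas_pos_inter hU hba ha).ne' hb

lemma apply_le_essSup' {f : ℝ → ℝ} (hf : Continuous f) {a : ℝ} (ha : a ∈ Icc (-π) π)
    {Bd : ℝ} (hub : ∀ y, f y ≤ Bd) :
    f a ≤ essSup f (volume.restrict (Icc (-π) π)) := by
  rw [essSup_eq_sInf]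
  refine le_csInf ⟨Bd, ?_⟩ ?_
  · simp only [mem_setOf_eq]
    rw [Measure.restrict_apply' measurableSet_Icc]
    have : {x | Bd < f x} = ∅ :=
      eq_empty_iff_forall_notMem.mpr fun x hx => absurd (hub x) (not_le.mpr hx)
    simp [this]
  · intro b hb
    simp only [mem_setOf_eq] at hb
    rw [Measure.restrict_apply' measurableSet_Icc] at hb
    by_contra hba
    push_neg at hba
    have hU : IsOpen {x | b < f x} := isOpen_lt continuous_const hf
    exact (meas_pos_inter hU hba ha).ne' hb


lemma essSup_le_bound {f : ℝ → ℝ} {Bd : ℝ} (h0 : ∀ y ∈ Icc (-π) π, 0 ≤ f y)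
    (hub : ∀ y, f y ≤ Bd) : essSup f (volume.restrict (Icc (-π) π)) ≤ Bd := by
  rw [essSup_eq_sInf]
  apply csInf_le
  · refine ⟨0, fun a ha => ?_⟩
    simp only [mem_setOf_eq] at ha
    rw [Measure.restrict_apply' measurableSet_Icc] at ha
    by_contra hneg
    push_neg at hneg
    have hsub : Icc (-π) π ⊆ {x | a < f x} ∩ Icc (-π) π :=
      fun x hx => ⟨lt_of_lt_of_le hneg (h0 x hx), hx⟩
    have hm : volume (Icc (-π) π) ≤ volume ({x | a < f x} ∩ Icc (-π) π) :=
      measure_mono hsub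
    rw [ha] at hm
    have h0' : volume (Icc (-π) π) = 0 := le_antisymm hm zero_le
    rw [Real.volume_Icc, ENNReal.ofReal_eq_zero] at h0'
    linarith [pi_pos]
  · simp only [mem_setOf_eq]
    rw [Measure.restrict_apply' measurableSet_Icc]
    have : {x | Bd < f x} = ∅ :=
      eq_empty_iff_forall_notMem.mpr fun x hx => absurd (hub x) (not_le.mpr hx)
    simp [this]

lemma bound_le_essInf {f : ℝ → ℝ} {B Bd : ℝ} (hlb : ∀ y ∈ Icc (-π) π, B ≤ f y)
    (hub : ∀ y ∈ Icc (-π) π, f y ≤ Bd) :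
    B ≤ essInf f (volume.restrict (Icc (-π) π)) := by
  rw [essInf_eq_sSup]
  apply le_csSup
  · refine ⟨Bd, fun a ha => ?_⟩
    simp only [mem_setOf_eq] at ha
    rw [Measure.restrict_apply' measurableSet_Icc] at ha
    by_contra hgt
    push_neg at hgt
    have hsub : Icc (-π) π ⊆ {x | f x < a} ∩ Icc (-π) π :=
      fun x hx => ⟨lt_of_le_of_lt (hub x hx) hgt, hx⟩
    have hm : volume (Icc (-π) π) ≤ volume ({x | f x < a} ∩ Icc (-π) π) :=
      measure_mono hsub
    rw [ha] at hm
    have h0' : volume (Icc (-π) π) = 0 := le_antisymm hm zero_le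
    rw [Real.volume_Icc, ENNReal.ofReal_eq_zero] at h0'
    linarith [pi_pos]
  · simp only [mem_setOf_eq]
    rw [Measure.restrict_apply' measurableSet_Icc]
    have : {x | f x < B} ∩ Icc (-π) π = ∅ := by
      ext x
      simp only [mem_inter_iff, mem_setOf_eq, mem_empty_iff_false, iff_false, not_and]
      exact fun hx hxI => absurd (hlb x hxI) (not_le.mpr hx)
    simp [this]

theorem gg_main (c K x₀ : ℝ) (hc : 0 < c) (hcπ : c * π < 1) (hK : 2*c*K = 1)
    (hx1 : -π ≤ x₀) (hx2 : x₀ ≤ π) :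
    (x₀ ≠ 0 → ∀ y ∈ Icc (-π) π, sdr (gg c K x₀) y < gg c K 0 y) ∧
    (x₀ = 0 → ∀ y ∈ Icc (-π) π, sdr (gg c K x₀) y = gg c K 0 y) := by
  have hπ := pi_pos
  have hcx1 : c * x₀ < 1 := by nlinarith
  have hcx2 : -1 < c * x₀ := by nlinarith
  have hub : ∀ y, gg c K x₀ y ≤ K - c/2*x₀^2 := by
    intro y
    rw [gg_max]
    rcases le_total y x₀ with h | h
    · have h0 : (0:ℝ) ≤ (1-c*x₀)/2*(x₀-y) := by nlinarith
      have := le_max_left ((1-c*x₀)/2*(x₀-y)) ((1+c*x₀)/2*(y-x₀))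
      linarith
    · have h0 : (0:ℝ) ≤ (1+c*x₀)/2*(y-x₀) := by nlinarith
      have := le_max_right ((1-c*x₀)/2*(x₀-y)) ((1+c*x₀)/2*(y-x₀))
      linarith
  have h0le : ∀ z ∈ Icc (-π) π, 0 ≤ gg c K x₀ z :=
    fun z hz => (gg_pos c K x₀ hc hcπ hK hx1 hx2 z hz).le
  have hmemπ : π ∈ Icc (-π) π := ⟨by linarith, le_rfl⟩
  have hmemm : -π ∈ Icc (-π) π := ⟨le_rfl, by linarith⟩
  constructor
  · -- strict inequality when x₀ ≠ 0
    intro hx0 y hy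
    have hyabs : |y| ≤ π := abs_le.mpr ⟨hy.1, hy.2⟩
    have hx2p : 0 < x₀^2 := by positivity
    by_cases h0 : y = 0
    · subst h0
      have hs : sdr (gg c K x₀) 0 = essSup (gg c K x₀) (volume.restrict (Icc (-π) π)) := by
        simp [sdr, decRearr]
      rw [hs, gg_zero]
      have h1 : essSup (gg c K x₀) (volume.restrict (Icc (-π) π)) ≤ K - c/2*x₀^2 :=
        essSup_le_bound h0le hub
      have h2 : (0:ℝ) < c/2*x₀^2 := by positivity
      simp only [abs_zero]
      linarith
    · by_cases hπy : |y| = π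
      · rw [sdr, decRearr, if_neg (not_le.mpr (by rw [hπy]; positivity)),
          if_neg (by rw [hπy]; exact lt_irrefl _)]
        have hIπ := essInf_le_apply' (gg_cont c K x₀) hmemπ h0le
        have hIm := essInf_le_apply' (gg_cont c K x₀) hmemm h0le
        have e1 : gg c K x₀ π = K - c/2*x₀*π - (π - x₀)/2 := by
          unfold gg; rw [abs_of_nonpos (by linarith)]; ring
        have e2 : gg c K x₀ (-π) = K + c/2*x₀*π - (x₀ + π)/2 := by
          unfold gg; rw [abs_of_nonneg (by linarith)]; ring
        rw [gg_zero, hπy]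
        rcases lt_trichotomy x₀ 0 with h | h | h
        · have : gg c K x₀ π < K - π/2 := by
            rw [e1]
            nlinarith [mul_pos (show (0:ℝ) < -x₀ by linarith)
              (show (0:ℝ) < 1 - c*π by linarith)]
          linarith
        · exact absurd h hx0
        · have : gg c K x₀ (-π) < K - π/2 := by
            rw [e2]
            nlinarith [mul_pos h (show (0:ℝ) < 1 - c*π by linarith)]
          linarith
      · have h1 : 0 < |y| := abs_pos.mpr h0
        have h2 : |y| < π := lt_of_le_of_ne hyabs hπy
        have hb := gg_mid c K x₀ hc hcπ hK hx1 hx2 (2*|y|) (by linarith) (by linarith)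
        rw [gg_zero]
        have hs : sdr (gg c K x₀) y = decRearr (gg c K x₀) (2*|y|) := rfl
        rw [hs]
        have hcy : c * |y| < 1 := by nlinarith
        nlinarith [hb, mul_pos (mul_pos hc hx2p) (show (0:ℝ) < 1 - c*|y| by linarith)]
  · -- equality when x₀ = 0
    intro hx0
    subst hx0
    intro y hy
    have hyabs : |y| ≤ π := abs_le.mpr ⟨hy.1, hy.2⟩
    have hubK : ∀ z, gg c K 0 z ≤ K := by
      intro z; rw [gg_zero]; linarith [abs_nonneg z]
    by_cases h0 : y = 0
    · subst h0
      have hs : sdr (gg c K 0) 0 = essSup (gg c K 0) (volume.restrict (Icc (-π) π)) := by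
        simp [sdr, decRearr]
      rw [hs, gg_zero]
      simp only [abs_zero]
      apply le_antisymm
      · have : essSup (gg c K 0) (volume.restrict (Icc (-π) π)) ≤ K :=
          essSup_le_bound h0le hubK
        linarith
      · have h0mem : (0:ℝ) ∈ Icc (-π) π := ⟨by linarith, by linarith⟩
        have := apply_le_essSup' (gg_cont c K 0) h0mem hubK
        rw [gg_zero] at this
        simp only [abs_zero] at this
        linarith
    · by_cases hπy : |y| = π
      · rw [sdr, decRearr, if_neg (not_le.mpr (by rw [hπy]; positivity)),
          if_neg (by rw [hπy]; exact lt_irrefl _)]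
        rw [gg_zero, hπy]
        apply le_antisymm
        · have := essInf_le_apply' (gg_cont c K 0) hmemπ h0le
          rw [gg_zero, abs_of_nonneg hπ.le] at this
          exact this
        · refine bound_le_essInf (fun z hz => ?_) (fun z _ => hubK z)
          rw [gg_zero]
          have : |z| ≤ π := abs_le.mpr ⟨hz.1, hz.2⟩
          linarith
      · have h1 : 0 < |y| := abs_pos.mpr h0
        have h2 : |y| < π := lt_of_le_of_ne hyabs hπy
        have hge : K - |y|/2 ≤ decRearr (gg c K 0) (2*|y|) := by
          rw [decRearr, if_neg (not_le.mpr (by linarith)), if_pos (by linarith)]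
          apply le_csInf
          · refine ⟨K, ?_⟩
            simp only [mem_setOf_eq]
            have hempty : {x | x ∈ Icc (-π) π ∧ K < gg c K 0 x} = ∅ := by
              ext x
              simp only [mem_setOf_eq, mem_empty_iff_false, iff_false, not_and]
              intro _
              exact not_lt.mpr (hubK x)
            rw [show {x ∈ Icc (-π) π | K < gg c K 0 x} = ∅ from hempty]
            simp
          · intro b hb
            by_contra hlt
            push_neg at hlt
            simp only [mem_setOf_eq] at hb
            set r := min (2*(K - b)) π with hr
            have hrπ : r ≤ π := min_le_right _ _
            have hrb : r ≤ 2*(K-b) := min_le_left _ _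
            have hry : |y| < r := lt_min (by linarith) h2
            have hsub : Ioo (-r) r ⊆ {x ∈ Icc (-π) π | b < gg c K 0 x} := by
              intro x hx
              have hxr : |x| < r := abs_lt.mpr ⟨hx.1, hx.2⟩
              refine ⟨⟨by linarith [hx.1], by linarith [hx.2]⟩, ?_⟩
              rw [gg_zero]
              linarith
            have hvol : volume (Ioo (-r) r) ≤
                volume {x ∈ Icc (-π) π | b < gg c K 0 x} := measure_mono hsub
            rw [Real.volume_Ioo] at hvol
            have hlt2 : ENNReal.ofReal (2*|y|) < ENNReal.ofReal (r - -r) := by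
              rw [ENNReal.ofReal_lt_ofReal_iff (by linarith)]
              linarith
            exact absurd hb (not_le.mpr (lt_of_lt_of_le hlt2 hvol))
        have hle := gg_mid c K 0 hc hcπ hK (by linarith) (by linarith) (2*|y|)
          (by linarith) (by linarith)
        have hsimp : (K - c/2*0^2) - (2*|y|)*(1-(c*0)^2)/4 = K - |y|/2 := by ring
        rw [hsimp] at hle
        rw [gg_zero]
        exact le_antisymm hle hge

/-- **Comparison of the s.d.r. of the Green's function with `G(0,·)`.** -/
theorem sdr_green_le
    (α : ℝ) (hα : 0 < α) (x₀ : ℝ) (hx₀ : x₀ ∈ Icc (-π) π) :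
    (∀ y ∈ Icc (-π) π, sdr (fun y => robinGreen α x₀ y) y ≤ robinGreen α 0 y) ∧
    ((∀ y ∈ Icc (-π) π, sdr (fun y => robinGreen α x₀ y) y = robinGreen α 0 y) ↔
      (∃ y ∈ Icc (-π) π, sdr (fun y => robinGreen α x₀ y) y = robinGreen α 0 y)) ∧
    ((∃ y ∈ Icc (-π) π, sdr (fun y => robinGreen α x₀ y) y = robinGreen α 0 y) ↔ x₀ = 0) := by
  have hπ := pi_pos
  have hden : 0 < 1 + α * π := by nlinarith
  have hc : 0 < cA α := div_pos hα hden
  have hcπ : cA α * π < 1 := by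
    rw [cA, div_mul_eq_mul_div, div_lt_one hden]
    linarith
  have hK : 2 * cA α * (1/(2*cA α)) = 1 := by
    field_simp
  have hgr : (fun y => robinGreen α x₀ y) = gg (cA α) (1/(2*cA α)) x₀ := by
    funext y; unfold robinGreen gg; ring
  have hgr0 : ∀ y : ℝ, robinGreen α 0 y = gg (cA α) (1/(2*cA α)) 0 y := by
    intro y; unfold robinGreen gg; ring
  obtain ⟨hlt, heqq⟩ := gg_main (cA α) (1/(2*cA α)) x₀ hc hcπ hK hx₀.1 hx₀.2
  have h0mem : (0:ℝ) ∈ Icc (-π) π := ⟨by linarith, by linarith⟩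
  simp only [hgr, hgr0]
  refine ⟨?_, ?_, ?_⟩
  · intro y hy
    by_cases h : x₀ = 0
    · exact (heqq h y hy).le
    · exact (hlt h y hy).le
  · constructor
    · intro h
      exact ⟨0, h0mem, h 0 h0mem⟩
    · rintro ⟨y, hy, hE⟩
      have hx0 : x₀ = 0 := by
        by_contra h
        exact absurd hE (ne_of_lt (hlt h y hy))
      exact heqq hx0
  · constructor
    · rintro ⟨y, hy, hE⟩
      by_contra h
      exact absurd hE (ne_of_lt (hlt h y hy))
    · intro h
      exact ⟨0, h0mem, heqq h 0 h0mem⟩
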